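/- Let m, n ≥ 1 be integers, M ≥ 2 a real number, μ ≥ 1/2 and σ ≥ Mμ. Let λ : ℕ → ℝ be a sequence for which there exists C₀ > 0 with |λ_j| ≤ C₀ · j^{M/(2n)} for all j ≥ 1, and let ω = (ω₁, …, ω_m) ∈ ℝ^m with ω ≠ 0. Then the following are equivalent: (i) for every ε > 0 there exists C_ε > 0 such that max_{1 ≤ r ≤ m} |τ_r − ω_r λ_j| ≥ C_ε · exp(−ε(‖τ‖^{1/σ} + j^{1/(2nμ)})) for all τ = (τ₁, …, τ_m) ∈ ℤ^m and all j ≥ 1; (ii) for every δ > 0 there exists C_δ > 0 such that max_{1 ≤ r ≤ m} |1 − exp(−2πi·ω_r·λ_j)| ≥ C_δ · exp(−δ · j^{1/(2nμ)}) for all j ≥ 1. -/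

import Mathlib

set_option maxHeartbeats 1000000

/-- The max norm of an integer vector, as a real number. -/
noncomputable def maxZ {m : ℕ} (τ : Fin m → ℤ) : ℝ := ⨆ r, |(τ r : ℝ)|

lemma abs_one_sub_exp (x : ℝ) :
    ‖1 - Complex.exp (-(2 * Real.pi * Complex.I) * x)‖ =
      2 * |Real.sin (Real.pi * x)| := by
  have h : -(2 * Real.pi * Complex.I) * x = ((-(2 * Real.pi * x) : ℝ) : ℂ) * Complex.I := by
    push_cast; ring
  rw [h, Complex.norm_def, Complex.normSq_apply]
  simp only [Complex.sub_re, Complex.sub_im, Complex.one_re, Complex.one_im,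
    Complex.exp_ofReal_mul_I_re, Complex.exp_ofReal_mul_I_im]
  have h2 : (1 - Real.cos (-(2 * Real.pi * x))) * (1 - Real.cos (-(2 * Real.pi * x))) +
      (0 - Real.sin (-(2 * Real.pi * x))) * (0 - Real.sin (-(2 * Real.pi * x))) =
      (2 * |Real.sin (Real.pi * x)|) ^ 2 := by
    have hs := Real.sin_sq_add_cos_sq (-(2 * Real.pi * x))
    have hh : |Real.sin (-(2 * Real.pi * x) / 2)| = |Real.sin (Real.pi * x)| := by
      rw [show -(2 * Real.pi * x) / 2 = -(Real.pi * x) by ring, Real.sin_neg, abs_neg]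
    have := Real.abs_sin_half (-(2 * Real.pi * x))
    rw [hh] at this
    have h4 : |Real.sin (Real.pi * x)| ^ 2 = (1 - Real.cos (-(2 * Real.pi * x))) / 2 := by
      rw [this, Real.sq_sqrt]
      nlinarith [Real.cos_le_one (-(2 * Real.pi * x))]
    nlinarith [h4]
  rw [h2, Real.sqrt_sq (by positivity)]

lemma sin_pi_shift (y : ℝ) (k : ℤ) :
    |Real.sin (Real.pi * (y - k))| = |Real.sin (Real.pi * y)| := by
  have h : Real.pi * (y - k) = Real.pi * y - k * Real.pi := by ring
  rw [h, Real.sin_sub, Real.sin_int_mul_pi, mul_zero, sub_zero, abs_mul,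
    Real.abs_cos_int_mul_pi, mul_one]

lemma sin_upper (y : ℝ) (k : ℤ) :
    |Real.sin (Real.pi * y)| ≤ Real.pi * |(k : ℝ) - y| := by
  rw [← sin_pi_shift y k]
  calc |Real.sin (Real.pi * (y - k))| ≤ |Real.pi * (y - k)| := Real.abs_sin_le_abs
    _ = Real.pi * |(k:ℝ) - y| := by
        rw [abs_mul, abs_of_nonneg Real.pi_pos.le, ← abs_neg (y - (k:ℝ))]; ring_nf

lemma sin_lower (y : ℝ) :
    2 * |y - round y| ≤ |Real.sin (Real.pi * y)| := by
  rw [← sin_pi_shift y (round y)]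
  have hd : |y - round y| ≤ 1 / 2 := abs_sub_round y
  have h2 : |Real.pi * (y - round y)| ≤ Real.pi / 2 := by
    rw [abs_mul, abs_of_nonneg Real.pi_pos.le]
    calc Real.pi * |y - ↑(round y)| ≤ Real.pi * (1/2) :=
          mul_le_mul_of_nonneg_left hd Real.pi_pos.le
      _ = Real.pi / 2 := by ring
  have := Real.mul_abs_le_abs_sin h2
  rw [abs_mul, abs_of_nonneg Real.pi_pos.le] at this
  calc 2 * |y - ↑(round y)| = 2 / Real.pi * (Real.pi * |y - ↑(round y)|) := by
        field_simp
    _ ≤ |Real.sin (Real.pi * (y - round y))| := this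

/-- Equivalence of the Diophantine condition on `max_r |τ_r - ω_r λ_j|` and the
lower bound on `max_r |1 - exp(-2πi ω_r λ_j)|` (Lemma 3.4 of the paper). -/
theorem stmt0 (m n : ℕ) (hm : 1 ≤ m) (hn : 1 ≤ n) (M μ σ : ℝ)
    (hM : 2 ≤ M) (hμ : 1 / 2 ≤ μ) (hσ : M * μ ≤ σ)
    (lam : ℕ → ℝ) (C₀ : ℝ) (hC₀ : 0 < C₀)
    (hlam : ∀ j : ℕ, 1 ≤ j → |lam j| ≤ C₀ * (j : ℝ) ^ (M / (2 * n)))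
    (ω : Fin m → ℝ) (hω : ω ≠ 0) :
    (∀ ε : ℝ, 0 < ε → ∃ Cε : ℝ, 0 < Cε ∧ ∀ (τ : Fin m → ℤ) (j : ℕ), 1 ≤ j →
        Cε * Real.exp (-ε * ((maxZ τ) ^ (1 / σ) + (j : ℝ) ^ (1 / (2 * n * μ)))) ≤
          ⨆ r, |(τ r : ℝ) - ω r * lam j|)
    ↔
    (∀ δ : ℝ, 0 < δ → ∃ Cδ : ℝ, 0 < Cδ ∧ ∀ j : ℕ, 1 ≤ j →
        Cδ * Real.exp (-δ * (j : ℝ) ^ (1 / (2 * n * μ))) ≤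
          ⨆ r, ‖1 - Complex.exp (-(2 * Real.pi * Complex.I) * ω r * lam j)‖) := by
  haveI : Nonempty (Fin m) := ⟨⟨0, hm⟩⟩
  have hnR : (1:ℝ) ≤ (n:ℝ) := by exact_mod_cast hn
  have hμ0 : (0:ℝ) < μ := by linarith
  have hσ0 : (0:ℝ) < σ := by nlinarith
  have hGF : ∀ (j : ℕ) (r : Fin m),
      ‖1 - Complex.exp (-(2 * Real.pi * Complex.I) * ω r * lam j)‖ =
        2 * |Real.sin (Real.pi * (ω r * lam j))| := by
    intro j r
    have : -(2 * Real.pi * Complex.I) * (ω r) * (lam j) =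
        -(2 * Real.pi * Complex.I) * ((ω r * lam j : ℝ) : ℂ) := by push_cast; ring
    rw [this, abs_one_sub_exp]
  have hmaxZ0 : ∀ τ : Fin m → ℤ, 0 ≤ maxZ τ := by
    intro τ
    rw [maxZ]
    exact le_trans (abs_nonneg _)
      (le_ciSup (f := fun r => |(τ r : ℝ)|) ((Set.finite_range _).bddAbove) (⟨0, hm⟩ : Fin m))
  constructor
  · -- (i) → (ii)
    intro h1 δ hδ
    obtain ⟨W, hW, hW0⟩ : ∃ W : ℝ, (∀ r, |ω r| ≤ W) ∧ 0 ≤ W := by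
      refine ⟨⨆ r, |ω r|, fun r =>
        le_ciSup (f := fun r => |ω r|) ((Set.finite_range _).bddAbove) r, ?_⟩
      exact le_trans (abs_nonneg _)
        (le_ciSup (f := fun r => |ω r|) ((Set.finite_range _).bddAbove) (⟨0, hm⟩ : Fin m))
    have hA : (0:ℝ) < W * C₀ + 1/2 := by positivity
    set K : ℝ := (W * C₀ + 1/2) ^ (1/σ) with hKdef
    have hK : 0 < K := Real.rpow_pos_of_pos hA _
    have hε : 0 < δ / (K + 1) := by positivity
    obtain ⟨Cε, hCε, hCe⟩ := h1 (δ / (K + 1)) hε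
    refine ⟨4 * Cε, by positivity, ?_⟩
    intro j hj
    have hjR : (1:ℝ) ≤ (j:ℝ) := by exact_mod_cast hj
    have hj0 : (0:ℝ) < (j:ℝ) := by linarith
    have hp0 : 0 ≤ M / (2 * (n:ℝ)) := by positivity
    have hjp1 : (1:ℝ) ≤ (j:ℝ) ^ (M / (2 * (n:ℝ))) := Real.one_le_rpow hjR hp0
    have hjp0 : (0:ℝ) ≤ (j:ℝ) ^ (M / (2 * (n:ℝ))) := by linarith
    set τ : Fin m → ℤ := fun r => round (ω r * lam j) with hτdef
    have hτbd : maxZ τ ≤ (W * C₀ + 1/2) * (j:ℝ) ^ (M / (2 * (n:ℝ))) := by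
      rw [maxZ]
      refine ciSup_le fun r => ?_
      have h1' : |(τ r : ℝ)| ≤ |(τ r : ℝ) - ω r * lam j| + |ω r * lam j| := by
        calc |(τ r : ℝ)| = |((τ r : ℝ) - ω r * lam j) + ω r * lam j| := by ring_nf
          _ ≤ _ := abs_add_le _ _
      have h2' : |(τ r : ℝ) - ω r * lam j| ≤ 1/2 := by
        rw [abs_sub_comm]; exact abs_sub_round _
      have h3' : |ω r * lam j| ≤ W * (C₀ * (j:ℝ) ^ (M / (2 * (n:ℝ)))) := by
        rw [abs_mul]
        exact mul_le_mul (hW r) (hlam j hj) (abs_nonneg _) hW0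
      nlinarith [hjp1, h1', h2', h3']
    have hmz0 : 0 ≤ maxZ τ := hmaxZ0 τ
    have hpq : M / (2 * (n:ℝ)) * (1/σ) ≤ 1 / (2 * (n:ℝ) * μ) := by
      have he : M / (2 * (n:ℝ)) * (1/σ) = M / (2 * (n:ℝ) * σ) := by
        field_simp
      rw [he, div_le_div_iff₀ (by positivity) (by positivity)]
      nlinarith
    have step1 : (maxZ τ) ^ (1/σ) ≤ K * (j:ℝ) ^ (1 / (2 * (n:ℝ) * μ)) := by
      calc (maxZ τ) ^ (1/σ)
          ≤ ((W * C₀ + 1/2) * (j:ℝ) ^ (M / (2 * (n:ℝ)))) ^ (1/σ) :=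
            Real.rpow_le_rpow hmz0 hτbd (by positivity)
        _ = K * ((j:ℝ) ^ (M / (2 * (n:ℝ)))) ^ (1/σ) := Real.mul_rpow hA.le hjp0
        _ = K * (j:ℝ) ^ (M / (2 * (n:ℝ)) * (1/σ)) := by rw [← Real.rpow_mul hj0.le]
        _ ≤ K * (j:ℝ) ^ (1 / (2 * (n:ℝ) * μ)) :=
            mul_le_mul_of_nonneg_left (Real.rpow_le_rpow_of_exponent_le hjR hpq) hK.le
    have hjq0 : 0 ≤ (j:ℝ) ^ (1 / (2 * (n:ℝ) * μ)) := Real.rpow_nonneg hj0.le _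
    have step2 : Real.exp (-δ * (j:ℝ) ^ (1 / (2 * (n:ℝ) * μ))) ≤
        Real.exp (-(δ / (K + 1)) * ((maxZ τ) ^ (1/σ) + (j:ℝ) ^ (1 / (2 * (n:ℝ) * μ)))) := by
      apply Real.exp_le_exp.2
      have hKne : K + 1 ≠ 0 := by positivity
      have h2 : (δ / (K + 1)) * ((K + 1) * (j:ℝ) ^ (1 / (2 * (n:ℝ) * μ))) =
          δ * (j:ℝ) ^ (1 / (2 * (n:ℝ) * μ)) := by
        field_simp
      have h3 : (δ / (K + 1)) * ((maxZ τ) ^ (1/σ) + (j:ℝ) ^ (1 / (2 * (n:ℝ) * μ))) ≤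
          (δ / (K + 1)) * ((K + 1) * (j:ℝ) ^ (1 / (2 * (n:ℝ) * μ))) := by
        apply mul_le_mul_of_nonneg_left _ hε.le
        nlinarith [step1]
      linarith [h2 ▸ h3]
    have hkey := hCe τ j hj
    have hFG : (⨆ r, |(τ r : ℝ) - ω r * lam j|) ≤
        (1/4) * ⨆ r, ‖1 - Complex.exp (-(2 * Real.pi * Complex.I) * ω r * lam j)‖ := by
      refine ciSup_le fun r => ?_
      have hlow := sin_lower (ω r * lam j)
      have hG : 2 * (2 * |ω r * lam j - (τ r : ℝ)|) ≤
          ‖1 - Complex.exp (-(2 * Real.pi * Complex.I) * ω r * lam j)‖ := by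
        rw [hGF j r]
        have hrr : ((τ r : ℤ) : ℝ) = ((round (ω r * lam j) : ℤ) : ℝ) := by rw [hτdef]
        rw [hrr]
        linarith [hlow]
      have hle : ‖1 - Complex.exp (-(2 * Real.pi * Complex.I) * ω r * lam j)‖ ≤
          ⨆ r, ‖1 - Complex.exp (-(2 * Real.pi * Complex.I) * ω r * lam j)‖ :=
        le_ciSup (f := fun r =>
          ‖1 - Complex.exp (-(2 * Real.pi * Complex.I) * ω r * lam j)‖)
          ((Set.finite_range _).bddAbove) r
      rw [abs_sub_comm] at hG
      linarith
    have hmul := mul_le_mul_of_nonneg_left step2 hCε.le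
    calc 4 * Cε * Real.exp (-δ * (j:ℝ) ^ (1 / (2 * (n:ℝ) * μ)))
        ≤ 4 * (Cε * Real.exp (-(δ / (K + 1)) *
            ((maxZ τ) ^ (1/σ) + (j:ℝ) ^ (1 / (2 * (n:ℝ) * μ))))) := by linarith
      _ ≤ 4 * ⨆ r, |(τ r : ℝ) - ω r * lam j| := by linarith [hkey]
      _ ≤ _ := by linarith [hFG]
  · -- (ii) → (i)
    intro h2 ε hε
    obtain ⟨Cδ, hCδ, hCd⟩ := h2 ε hε
    have hπ : (0:ℝ) < Real.pi := Real.pi_pos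
    refine ⟨Cδ / (2 * Real.pi), by positivity, ?_⟩
    intro τ j hj
    have hjR : (1:ℝ) ≤ (j:ℝ) := by exact_mod_cast hj
    have hjq0 : 0 ≤ (j:ℝ) ^ (1 / (2 * (n:ℝ) * μ)) := Real.rpow_nonneg (by positivity) _
    have hX0 : 0 ≤ (maxZ τ) ^ (1/σ) := Real.rpow_nonneg (hmaxZ0 τ) _
    have hkey := hCd j hj
    have hGF' : (⨆ r, ‖1 - Complex.exp (-(2 * Real.pi * Complex.I) * ω r * lam j)‖) ≤
        2 * Real.pi * ⨆ r, |(τ r : ℝ) - ω r * lam j| := by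
      refine ciSup_le fun r => ?_
      have hle : |(τ r : ℝ) - ω r * lam j| ≤ ⨆ r, |(τ r : ℝ) - ω r * lam j| :=
        le_ciSup (f := fun r => |(τ r : ℝ) - ω r * lam j|) ((Set.finite_range _).bddAbove) r
      rw [hGF j r]
      have hup := sin_upper (ω r * lam j) (τ r)
      have hmul := mul_le_mul_of_nonneg_left hle hπ.le
      linarith
    have hexp : Real.exp (-ε * ((maxZ τ) ^ (1/σ) + (j:ℝ) ^ (1 / (2 * (n:ℝ) * μ)))) ≤
        Real.exp (-ε * (j:ℝ) ^ (1 / (2 * (n:ℝ) * μ))) := by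
      apply Real.exp_le_exp.2
      nlinarith
    have h1 : Cδ * Real.exp (-ε * (j:ℝ) ^ (1 / (2 * (n:ℝ) * μ))) ≤
        2 * Real.pi * ⨆ r, |(τ r : ℝ) - ω r * lam j| := le_trans hkey hGF'
    have h3 := mul_le_mul_of_nonneg_left hexp hCδ.le
    rw [div_mul_eq_mul_div, div_le_iff₀ (by positivity)]
    nlinarith [h1, h3]
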